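/- For constants α₂ ≠ 0, α₄, α₅, d₁, d₂ with d₁² + d₂² ≠ 0, the affine function φ(x,y,t) = ((α₅d₁ - α₄d₂)/(2α₂(d₁² + d₂²)))·(d₂x - d₂α₄t/α₂ - d₁y + d₁α₅t/α₂) satisfies φ_t - 2φ_x² - 2φφ_xx - 2φ_y² - 2φφ_yy = 0. -/

import Mathlib

noncomputable def px (f : ℝ → ℝ → ℝ → ℝ) : ℝ → ℝ → ℝ → ℝ :=
  fun x y t => deriv (fun u => f u y t) x

noncomputable def py (f : ℝ → ℝ → ℝ → ℝ) : ℝ → ℝ → ℝ → ℝ :=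
  fun x y t => deriv (fun u => f x u t) y

noncomputable def pt (f : ℝ → ℝ → ℝ → ℝ) : ℝ → ℝ → ℝ → ℝ :=
  fun x y t => deriv (fun u => f x y u) t


/-- The affine invariant solution
    φ(x,y,t) = ((α₅d₁ - α₄d₂)/(2α₂(d₁²+d₂²)))·(d₂x - d₂α₄t/α₂ - d₁y + d₁α₅t/α₂)
    satisfies the h = 0 population PDE φ_t - 2φ_x² - 2φφ_xx - 2φ_y² - 2φφ_yy = 0. -/
theorem stmt_17 (α₂ α₄ α₅ d₁ d₂ : ℝ) (hα₂ : α₂ ≠ 0) (hd : d₁ ^ 2 + d₂ ^ 2 ≠ 0)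
    (φ : ℝ → ℝ → ℝ → ℝ)
    (hφ : φ = fun x y t =>
      (α₅ * d₁ - α₄ * d₂) / (2 * α₂ * (d₁ ^ 2 + d₂ ^ 2)) *
        (d₂ * x - d₂ * α₄ * t / α₂ - d₁ * y + d₁ * α₅ * t / α₂))
    (x y t : ℝ) :
    pt φ x y t - 2 * (px φ x y t) ^ 2 - 2 * φ x y t * px (px φ) x y t -
      2 * (py φ x y t) ^ 2 - 2 * φ x y t * py (py φ) x y t = 0 := by
  subst hφ
  set C := (α₅ * d₁ - α₄ * d₂) / (2 * α₂ * (d₁ ^ 2 + d₂ ^ 2)) with hC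
  have hx : ∀ y t x : ℝ, px (fun x y t => C *
      (d₂ * x - d₂ * α₄ * t / α₂ - d₁ * y + d₁ * α₅ * t / α₂)) x y t = C * d₂ := by
    intro y t x
    simp only [px]
    rw [show (fun u : ℝ => C * (d₂ * u - d₂ * α₄ * t / α₂ - d₁ * y + d₁ * α₅ * t / α₂))
        = fun u : ℝ => (C * d₂) * u + C * (- d₂ * α₄ * t / α₂ - d₁ * y + d₁ * α₅ * t / α₂)
        by funext u; ring]
    rw [deriv_add_const, deriv_const_mul _ differentiableAt_fun_id, deriv_id'', mul_one]
  have hy : ∀ x t y : ℝ, py (fun x y t => C *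
      (d₂ * x - d₂ * α₄ * t / α₂ - d₁ * y + d₁ * α₅ * t / α₂)) x y t = -(C * d₁) := by
    intro x t y
    simp only [py]
    rw [show (fun u : ℝ => C * (d₂ * x - d₂ * α₄ * t / α₂ - d₁ * u + d₁ * α₅ * t / α₂))
        = fun u : ℝ => (-(C * d₁)) * u + C * (d₂ * x - d₂ * α₄ * t / α₂ + d₁ * α₅ * t / α₂)
        by funext u; ring]
    rw [deriv_add_const, deriv_const_mul _ differentiableAt_fun_id, deriv_id'', mul_one]
  have ht : pt (fun x y t => C *
      (d₂ * x - d₂ * α₄ * t / α₂ - d₁ * y + d₁ * α₅ * t / α₂)) x y t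
      = C * ((d₁ * α₅ - d₂ * α₄) / α₂) := by
    simp only [pt]
    rw [show (fun u : ℝ => C * (d₂ * x - d₂ * α₄ * u / α₂ - d₁ * y + d₁ * α₅ * u / α₂))
        = fun u : ℝ => (C * ((d₁ * α₅ - d₂ * α₄) / α₂)) * u + C * (d₂ * x - d₁ * y)
        by funext u; field_simp; ring]
    rw [deriv_add_const, deriv_const_mul _ differentiableAt_fun_id, deriv_id'', mul_one]
  have hxx : px (px (fun x y t => C *
      (d₂ * x - d₂ * α₄ * t / α₂ - d₁ * y + d₁ * α₅ * t / α₂))) x y t = 0 := by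
    simp only [px] at hx ⊢
    rw [show (fun u : ℝ => deriv (fun u' => C *
        (d₂ * u' - d₂ * α₄ * t / α₂ - d₁ * y + d₁ * α₅ * t / α₂)) u) = fun _ : ℝ => C * d₂
        by funext u; exact hx y t u]
    simp
  have hyy : py (py (fun x y t => C *
      (d₂ * x - d₂ * α₄ * t / α₂ - d₁ * y + d₁ * α₅ * t / α₂))) x y t = 0 := by
    simp only [py] at hy ⊢
    rw [show (fun u : ℝ => deriv (fun u' => C *
        (d₂ * x - d₂ * α₄ * t / α₂ - d₁ * u' + d₁ * α₅ * t / α₂)) u) = fun _ : ℝ => -(C * d₁)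
        by funext u; exact hy x t u]
    simp
  have hkey : C * ((d₁ * α₅ - d₂ * α₄) / α₂) = 2 * C ^ 2 * (d₁ ^ 2 + d₂ ^ 2) := by
    rw [hC]; field_simp
  rw [ht, hx, hy, hxx, hyy, hkey]
  ring
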